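/- arXiv:1301.0429 — 2 statements merged into one kernel-verified Lean document; each statement's English description precedes it below -/
import Mathlib

section
/- Let F : ℝ → ℝ be continuous and positive on [r_-, ∞) with r_- < r_+, and suppose there exists a differentiable strictly increasing function ρ : [r_-, ∞) → ℝ satisfying F(r)(r - r_+)(r - r_-) ρ'(r) = (ρ(r) - ρ_+)(ρ(r) - ρ_-) for all r, where ρ_± = ρ(r_±). Then F(r_+) = F(r_-) = (ρ_+ - ρ_-)/(r_+ - r_-). -/
open Set Filter Topology

/-- Key auxiliary lemma: if the ODE holds with roots `a` and `o`, then evaluating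
the limit of `deriv ρ` at `a` from the right gives `F a = (ρ a - ρ o) / (a - o)`. -/
lemma stmt_16_key (F ρ : ℝ → ℝ) (rm a o b : ℝ) (ha : rm ≤ a) (hb : a < b)
    (hob : ∀ r ∈ Set.Ioo a b, r ≠ o) (hao : a ≠ o)
    (hFcont : ContinuousOn F (Set.Ici rm))
    (hFpos : ∀ r ∈ Set.Ici rm, 0 < F r)
    (hρdiff : ∀ r ∈ Set.Ici rm, DifferentiableAt ℝ ρ r)
    (hd : 0 < deriv ρ a)
    (hODE : ∀ r ∈ Set.Ici rm,
      F r * ((r - a) * (r - o)) * deriv ρ r = (ρ r - ρ a) * (ρ r - ρ o)) :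
    F a = (ρ a - ρ o) / (a - o) := by
  have ha' : a ∈ Set.Ici rm := ha
  have hFa : F a ≠ 0 := (hFpos a ha').ne'
  have haod : a - o ≠ 0 := sub_ne_zero.mpr hao
  have hsub : Set.Ioo a b ⊆ Set.Ici rm := fun r hr => le_trans ha (le_of_lt hr.1)
  set e : ℝ := deriv ρ a * ((ρ a - ρ o) / (F a * (a - o))) with he
  -- slope tendsto
  have hslope : Tendsto (fun r => (ρ r - ρ a) / (r - a)) (𝓝[>] a) (𝓝 (deriv ρ a)) := by
    have h1 : Tendsto (slope ρ a) (𝓝[≠] a) (𝓝 (deriv ρ a)) :=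
      hasDerivAt_iff_tendsto_slope.mp (hρdiff a ha').hasDerivAt
    have h2 : Tendsto (slope ρ a) (𝓝[>] a) (𝓝 (deriv ρ a)) :=
      h1.mono_left (nhdsWithin_mono a fun x hx => ne_of_gt hx)
    refine h2.congr fun r => ?_
    rw [slope_def_field]
  have hρcont : Tendsto ρ (𝓝[>] a) (𝓝 (ρ a)) :=
    tendsto_nhdsWithin_of_tendsto_nhds (hρdiff a ha').continuousAt.tendsto
  have hFt : Tendsto F (𝓝[>] a) (𝓝 (F a)) := by
    have : Tendsto F (𝓝[Set.Ici rm] a) (𝓝 (F a)) := hFcont a ha'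
    exact this.mono_left (nhdsWithin_mono a fun x hx => le_trans ha (le_of_lt hx))
  have hid : Tendsto (fun r : ℝ => r) (𝓝[>] a) (𝓝 a) := tendsto_id.mono_left nhdsWithin_le_nhds
  have hgt : Tendsto (fun r => (ρ r - ρ a) / (r - a) * ((ρ r - ρ o) / (F r * (r - o))))
      (𝓝[>] a) (𝓝 e) := by
    rw [he]
    exact hslope.mul (((hρcont.sub tendsto_const_nhds).div
      ((hFt.mul (hid.sub tendsto_const_nhds))) (mul_ne_zero hFa haod)))
  have hsmem : Set.Ioo a b ∈ 𝓝[>] a := Ioo_mem_nhdsGT_of_mem ⟨le_refl a, hb⟩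
  have hderiv_eq : ∀ r ∈ Set.Ioo a b,
      deriv ρ r = (ρ r - ρ a) / (r - a) * ((ρ r - ρ o) / (F r * (r - o))) := by
    intro r hrs
    have hrm := hsub hrs
    have h1 := hODE r hrm
    have hFr : F r ≠ 0 := (hFpos r hrm).ne'
    have hra : r - a ≠ 0 := sub_ne_zero.mpr (ne_of_gt hrs.1)
    have hro : r - o ≠ 0 := sub_ne_zero.mpr (hob r hrs)
    field_simp
    nlinarith [h1]
  have hdt : Tendsto (deriv ρ) (𝓝[>] a) (𝓝 e) := by
    refine hgt.congr' ?_
    filter_upwards [hsmem] with r hrs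
    exact (hderiv_eq r hrs).symm
  have hdiffon : DifferentiableOn ℝ ρ (Set.Ioo a b) :=
    fun r hrs => (hρdiff r (hsub hrs)).differentiableWithinAt
  have hclim : ContinuousWithinAt ρ (Set.Ioo a b) a :=
    (hρdiff a ha').continuousAt.continuousWithinAt
  have h4 : HasDerivWithinAt ρ e (Set.Ici a) a :=
    hasDerivWithinAt_Ici_of_tendsto_deriv hdiffon hclim hsmem hdt
  have h2 : HasDerivWithinAt ρ (deriv ρ a) (Set.Ici a) a :=
    (hρdiff a ha').hasDerivAt.hasDerivWithinAt
  have hud : UniqueDiffWithinAt ℝ (Set.Ici a) a := uniqueDiffOn_Ici a a Set.self_mem_Ici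
  have hee : e = deriv ρ a := by
    rw [← h4.derivWithin hud, ← h2.derivWithin hud]
  -- algebra
  have hd0 : deriv ρ a ≠ 0 := hd.ne'
  rw [he] at hee
  rw [eq_div_iff haod]
  have := hee
  field_simp at this
  linarith

/-- If a strictly increasing differentiable conformal coordinate ρ satisfies
F(r)(r-r₊)(r-r₋)ρ'(r) = (ρ(r)-ρ₊)(ρ(r)-ρ₋), then
F(r₊) = F(r₋) = (ρ₊-ρ₋)/(r₊-r₋). -/
theorem stmt_16 (F ρ : ℝ → ℝ) (rm rp : ℝ) (hr : rm < rp)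
    (hFcont : ContinuousOn F (Set.Ici rm))
    (hFpos : ∀ r ∈ Set.Ici rm, 0 < F r)
    (hρdiff : ∀ r ∈ Set.Ici rm, DifferentiableAt ℝ ρ r)
    (hρmono : StrictMonoOn ρ (Set.Ici rm))
    (hρ'p : 0 < deriv ρ rp) (hρ'm : 0 < deriv ρ rm)
    (hODE : ∀ r ∈ Set.Ici rm,
      F r * (r - rp) * (r - rm) * deriv ρ r = (ρ r - ρ rp) * (ρ r - ρ rm)) :
    F rp = (ρ rp - ρ rm) / (rp - rm) ∧ F rm = (ρ rp - ρ rm) / (rp - rm) := by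
  constructor
  · exact stmt_16_key F ρ rm rp rm (rp + 1) hr.le (by linarith)
      (fun r hrs => by have := hrs.1; intro h; linarith [hr]) (ne_of_gt hr)
      hFcont hFpos hρdiff hρ'p
      (fun r hrm => by have := hODE r hrm; linarith [this, mul_comm (F r) 1])
  · have h := stmt_16_key F ρ rm rm rp rp le_rfl hr
      (fun r hrs => ne_of_lt hrs.2) (ne_of_lt hr)
      hFcont hFpos hρdiff hρ'm
      (fun r hrm => by have := hODE r hrm; nlinarith [this])
    rw [h, ← neg_sub (ρ rp), ← neg_sub rp, neg_div_neg_eq]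
end

section
/- Under the assumptions of the hidden conformal symmetry setup: if F(r_±) = λ T_± A_±/(r_+ - r_-) for a nonzero constant λ (with T_±, A_± > 0, r_- < r_+), and there exists a monotone conformal coordinate ρ with F(r)(r-r_+)(r-r_-)ρ'(r) = (ρ-ρ_+)(ρ-ρ_-), then T_+ A_+ = T_- A_-. -/
open Filter Set Topology


/-- If `f` is differentiable on `Ici a` and its derivative tends to `L` from the right
at `a`, then `deriv f a = L`. -/
lemma deriv_eq_of_tendsto_right {f : ℝ → ℝ} {a L : ℝ}
    (hd : ∀ r ∈ Set.Ici a, DifferentiableAt ℝ f r)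
    (hL : Tendsto (deriv f) (𝓝[>] a) (𝓝 L)) : deriv f a = L := by
  have hda : HasDerivAt f (deriv f a) a := (hd a Set.self_mem_Ici).hasDerivAt
  have hslope : Tendsto (slope f a) (𝓝[>] a) (𝓝 (deriv f a)) :=
    (hasDerivAt_iff_tendsto_slope.1 hda).mono_left
      (nhdsWithin_mono _ (fun x hx => ne_of_gt hx))
  have key : ∀ r, a < r → ∃ c ∈ Set.Ioo a r, deriv f c = slope f a r := by
    intro r hr
    refine exists_deriv_eq_slope' f hr ?_ ?_
    · exact fun x hx => ((hd x hx.1).continuousAt).continuousWithinAt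
    · exact fun x hx => (hd x (le_of_lt hx.1)).differentiableWithinAt
  classical
  set g : ℝ → ℝ := fun r => if h : a < r then (key r h).choose else a with hg
  have hgmem : ∀ r, a < r → g r ∈ Set.Ioo a r := by
    intro r hr
    simp only [hg, dif_pos hr]
    exact (key r hr).choose_spec.1
  have hgeq : ∀ r, a < r → deriv f (g r) = slope f a r := by
    intro r hr
    simp only [hg, dif_pos hr]
    exact (key r hr).choose_spec.2
  have hgt : Tendsto g (𝓝[>] a) (𝓝[>] a) := by
    rw [tendsto_nhdsWithin_iff]
    constructor
    · refine tendsto_of_tendsto_of_tendsto_of_le_of_le'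
        (tendsto_const_nhds : Tendsto (fun _ : ℝ => a) (𝓝[>] a) (𝓝 a))
        (tendsto_id.mono_left nhdsWithin_le_nhds) ?_ ?_
      · filter_upwards [self_mem_nhdsWithin] with r hr
        exact le_of_lt (hgmem r hr).1
      · filter_upwards [self_mem_nhdsWithin] with r hr
        exact le_of_lt (hgmem r hr).2
    · filter_upwards [self_mem_nhdsWithin] with r hr
      exact (hgmem r hr).1
  have h1 : Tendsto (fun r => deriv f (g r)) (𝓝[>] a) (𝓝 L) := hL.comp hgt
  have h2 : Tendsto (slope f a) (𝓝[>] a) (𝓝 L) := by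
    refine h1.congr' ?_
    filter_upwards [self_mem_nhdsWithin] with r hr
    exact hgeq r hr
  exact tendsto_nhds_unique hslope h2



/-- T₊A₊ = T₋A₋ is a necessary condition for the existence of the hidden
conformal symmetry: given F(r_±) = λT_±A_±/(r₊-r₋) and a monotone conformal
coordinate ρ solving F(r)(r-r₊)(r-r₋)ρ' = (ρ-ρ₊)(ρ-ρ₋), one has T₊A₊ = T₋A₋. -/
theorem stmt_17 (F : ℝ → ℝ) (rm rp Tp Tm Ap Am lam : ℝ) (hr : rm < rp)
    (hTp : 0 < Tp) (hTm : 0 < Tm) (hAp : 0 < Ap) (hAm : 0 < Am)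
    (hlam : lam ≠ 0)
    (hFp : F rp = lam * Tp * Ap / (rp - rm))
    (hFm : F rm = lam * Tm * Am / (rp - rm))
    (hFcont : ContinuousOn F (Set.Ici rm))
    (hFpos : ∀ r ∈ Set.Ici rm, 0 < F r)
    (hρ : ∃ ρ : ℝ → ℝ, (∀ r ∈ Set.Ici rm, DifferentiableAt ℝ ρ r)
      ∧ StrictMonoOn ρ (Set.Ici rm)
      ∧ 0 < deriv ρ rp ∧ 0 < deriv ρ rm
      ∧ ∀ r ∈ Set.Ici rm,
          F r * (r - rp) * (r - rm) * deriv ρ r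
            = (ρ r - ρ rp) * (ρ r - ρ rm)) :
    Tp * Ap = Tm * Am := by
  obtain ⟨ρ, hdiff, hmono, hdp, hdm, hode⟩ := hρ
  have hrne : rp - rm ≠ 0 := sub_ne_zero.2 (ne_of_gt hr)
  have hFpp : 0 < F rp := hFpos rp (le_of_lt hr)
  have hFmp : 0 < F rm := hFpos rm Set.self_mem_Ici
  -- ODE solved for deriv ρ near rp (from the right)
  have hexp : ∀ r, rm < r → r ≠ rp →
      deriv ρ r = ((ρ r - ρ rp) / (r - rp)) * (ρ r - ρ rm) / (F r * (r - rm)) := by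
    intro r hrm hrp
    have h := hode r (le_of_lt hrm)
    have h1 : F r ≠ 0 := ne_of_gt (hFpos r (le_of_lt hrm))
    have h2 : r - rp ≠ 0 := sub_ne_zero.2 hrp
    have h3 : r - rm ≠ 0 := sub_ne_zero.2 (ne_of_gt hrm)
    field_simp
    linarith [h]
  -- limit at rp from the right
  have hslopep : Tendsto (fun r => (ρ r - ρ rp) / (r - rp)) (𝓝[>] rp) (𝓝 (deriv ρ rp)) := by
    have := hasDerivAt_iff_tendsto_slope.1 (hdiff rp (le_of_lt hr)).hasDerivAt
    have h2 := this.mono_left (nhdsWithin_mono rp (fun x hx => ne_of_gt hx) :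
      𝓝[>] rp ≤ 𝓝[≠] rp)
    refine h2.congr ?_
    intro r
    rw [slope_def_field]
  have hcontρp : ContinuousAt ρ rp := (hdiff rp (le_of_lt hr)).continuousAt
  have hcontFp : ContinuousAt F rp :=
    hFcont.continuousAt (Ici_mem_nhds hr)
  have hTp1 : Tendsto (fun r => ((ρ r - ρ rp) / (r - rp)) * (ρ r - ρ rm) / (F r * (r - rm)))
      (𝓝[>] rp) (𝓝 (deriv ρ rp * (ρ rp - ρ rm) / (F rp * (rp - rm)))) := by
    have hnum : Tendsto (fun r => ((ρ r - ρ rp) / (r - rp)) * (ρ r - ρ rm))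
        (𝓝[>] rp) (𝓝 (deriv ρ rp * (ρ rp - ρ rm))) := by
      refine hslopep.mul ?_
      exact ((hcontρp.tendsto.sub tendsto_const_nhds).mono_left nhdsWithin_le_nhds)
    have hden : Tendsto (fun r => F r * (r - rm)) (𝓝[>] rp) (𝓝 (F rp * (rp - rm))) := by
      exact ((hcontFp.tendsto.mul (tendsto_id.sub tendsto_const_nhds)).mono_left
        nhdsWithin_le_nhds)
    exact hnum.div hden (by positivity)
  have hDp : Tendsto (deriv ρ) (𝓝[>] rp) (𝓝 (deriv ρ rp * (ρ rp - ρ rm) / (F rp * (rp - rm)))) := by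
    refine hTp1.congr' ?_
    filter_upwards [self_mem_nhdsWithin,
      mem_nhdsWithin_of_mem_nhds (Ioi_mem_nhds hr)] with r hr1 hr2
    exact (hexp r hr2 (ne_of_gt hr1)).symm
  have heqp : deriv ρ rp = deriv ρ rp * (ρ rp - ρ rm) / (F rp * (rp - rm)) :=
    deriv_eq_of_tendsto_right (fun r hr' => hdiff r (le_trans (le_of_lt hr) hr')) hDp
  have hkeyp : F rp * (rp - rm) = ρ rp - ρ rm := by
    have hd0 : deriv ρ rp ≠ 0 := ne_of_gt hdp
    have hden : F rp * (rp - rm) ≠ 0 := by positivity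
    rw [eq_div_iff hden] at heqp
    exact mul_left_cancel₀ hd0 heqp
  -- limit at rm from the right
  have hexp2 : ∀ r, rm < r → r ≠ rp →
      deriv ρ r = (ρ r - ρ rp) * ((ρ r - ρ rm) / (r - rm)) / (F r * (r - rp)) := by
    intro r hrm hrp
    have h := hode r (le_of_lt hrm)
    have h1 : F r ≠ 0 := ne_of_gt (hFpos r (le_of_lt hrm))
    have h2 : r - rp ≠ 0 := sub_ne_zero.2 hrp
    have h3 : r - rm ≠ 0 := sub_ne_zero.2 (ne_of_gt hrm)
    field_simp
    linarith [h]
  have hslopem : Tendsto (fun r => (ρ r - ρ rm) / (r - rm)) (𝓝[>] rm) (𝓝 (deriv ρ rm)) := by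
    have := hasDerivAt_iff_tendsto_slope.1 (hdiff rm Set.self_mem_Ici).hasDerivAt
    have h2 := this.mono_left (nhdsWithin_mono rm (fun x hx => ne_of_gt hx) :
      𝓝[>] rm ≤ 𝓝[≠] rm)
    refine h2.congr ?_
    intro r
    rw [slope_def_field]
  have hcontρm : ContinuousAt ρ rm := (hdiff rm Set.self_mem_Ici).continuousAt
  have hcontFm : Tendsto F (𝓝[>] rm) (𝓝 (F rm)) :=
    (hFcont rm Set.self_mem_Ici).tendsto.mono_left (nhdsWithin_mono rm Ioi_subset_Ici_self)
  have hTm1 : Tendsto (fun r => (ρ r - ρ rp) * ((ρ r - ρ rm) / (r - rm)) / (F r * (r - rp)))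
      (𝓝[>] rm) (𝓝 ((ρ rm - ρ rp) * deriv ρ rm / (F rm * (rm - rp)))) := by
    have hnum : Tendsto (fun r => (ρ r - ρ rp) * ((ρ r - ρ rm) / (r - rm)))
        (𝓝[>] rm) (𝓝 ((ρ rm - ρ rp) * deriv ρ rm)) :=
      ((hcontρm.tendsto.sub tendsto_const_nhds).mono_left nhdsWithin_le_nhds).mul hslopem
    have hden : Tendsto (fun r => F r * (r - rp)) (𝓝[>] rm) (𝓝 (F rm * (rm - rp))) :=
      hcontFm.mul ((tendsto_id.sub tendsto_const_nhds).mono_left nhdsWithin_le_nhds)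
    refine hnum.div hden ?_
    have : rm - rp ≠ 0 := sub_ne_zero.2 (ne_of_lt hr)
    exact mul_ne_zero (ne_of_gt hFmp) this
  have hDm : Tendsto (deriv ρ) (𝓝[>] rm)
      (𝓝 ((ρ rm - ρ rp) * deriv ρ rm / (F rm * (rm - rp)))) := by
    refine hTm1.congr' ?_
    filter_upwards [self_mem_nhdsWithin,
      mem_nhdsWithin_of_mem_nhds (Iio_mem_nhds hr)] with r hr1 hr2
    exact (hexp2 r hr1 (ne_of_lt hr2)).symm
  have heqm : deriv ρ rm = (ρ rm - ρ rp) * deriv ρ rm / (F rm * (rm - rp)) :=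
    deriv_eq_of_tendsto_right hdiff hDm
  have hkeym : F rm * (rm - rp) = ρ rm - ρ rp := by
    have hd0 : deriv ρ rm ≠ 0 := ne_of_gt hdm
    have hden : F rm * (rm - rp) ≠ 0 :=
      mul_ne_zero (ne_of_gt hFmp) (sub_ne_zero.2 (ne_of_lt hr))
    rw [eq_div_iff hden] at heqm
    have h2 : deriv ρ rm * (F rm * (rm - rp)) = deriv ρ rm * (ρ rm - ρ rp) := by
      linear_combination heqm
    exact mul_left_cancel₀ hd0 h2
  -- combine
  have hFeq : F rp = F rm := by
    have : F rp * (rp - rm) = F rm * (rp - rm) := by linarith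
    exact mul_right_cancel₀ hrne this
  rw [hFp, hFm] at hFeq
  have h1 : lam * Tp * Ap = lam * Tm * Am := by
    field_simp [hrne] at hFeq
    linear_combination lam * hFeq
  have : lam * (Tp * Ap) = lam * (Tm * Am) := by linarith
  exact mul_left_cancel₀ hlam this
end
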